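/- arXiv:1911.12904 — 4 statements merged into one kernel-verified Lean document; each statement's English description precedes it below -/
import Mathlib

section
/- Well-behaved asymmetric delta lenses are closed under sequential composition: given delta lenses k = (get¹, put¹) : 𝒜 → ℬ and ℓ = (get², put²) : ℬ → 𝒞, their composite is the delta lens (get¹ ⋙ get², put) with put_A(w) := put¹_A(put²_{get¹(A)}(w)) for A ∈ 𝒜 and w : get²(get¹(A)) ⟶ C'; if k and ℓ both satisfy Stability and Putget, then so does their composite. -/
open CategoryTheory

universe v₁ v₂ v₃ u₁ u₂ u₃

/-- An asymmetric delta lens from `S` to `T`: a functor `get : S ⥤ T` together with,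
for every object `A` and every morphism `v : get(A) ⟶ B'`, a lifted morphism
`put A v : A ⟶ A'` whose target satisfies `get(A') = B'` (the Putget₀ law). -/
structure DLens (S : Type u₁) [Category.{v₁} S] (T : Type u₂) [Category.{v₂} T] where
  /-- the get functor -/
  get : S ⥤ T
  /-- target of the propagated update -/
  tgt : ∀ (A : S) {B' : T}, (get.obj A ⟶ B') → S
  /-- the put operation `put_A(v) : A ⟶ A'` -/
  put : ∀ (A : S) {B' : T} (v : get.obj A ⟶ B'), A ⟶ tgt A v
  /-- the Putget₀ law: `get(A') = B'` -/
  putget₀ : ∀ (A : S) {B' : T} (v : get.obj A ⟶ B'), get.obj (tgt A v) = B'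

namespace DLens

variable {S : Type u₁} [Category.{v₁} S] {T : Type u₂} [Category.{v₂} T]

/-- Well-behavedness of a delta lens: Stability and Putget. -/
structure IsWb (ℓ : DLens S T) : Prop where
  /-- Stability: the target of the update propagated from an identity is the original object -/
  tgt_id : ∀ A : S, ℓ.tgt A (𝟙 (ℓ.get.obj A)) = A
  /-- Stability: `put_A(id_{get A}) = id_A` -/
  put_id : ∀ A : S, ℓ.put A (𝟙 (ℓ.get.obj A)) = eqToHom (tgt_id A).symm
  /-- Putget: `get(put_A(v)) = v` -/
  putget : ∀ (A : S) {B' : T} (v : ℓ.get.obj A ⟶ B'),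
    ℓ.get.map (ℓ.put A v) ≫ eqToHom (ℓ.putget₀ A v) = v

variable {A : Type u₁} [Category.{v₁} A] {B : Type u₂} [Category.{v₂} B]
  {C : Type u₃} [Category.{v₃} C]

/-- Sequential composition of delta lenses: `get = get¹ ⋙ get²` and
`put_A(w) = put¹_A (put²_{get¹ A} w)`. -/
def seq (k : DLens A B) (ℓ : DLens B C) : DLens A C where
  get := k.get ⋙ ℓ.get
  tgt := fun A' {C'} w => k.tgt A' (ℓ.put (k.get.obj A') w)
  put := fun A' {C'} w => k.put A' (ℓ.put (k.get.obj A') w)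
  putget₀ := fun A' {C'} w => by
    show ℓ.get.obj (k.get.obj (k.tgt A' (ℓ.put (k.get.obj A') w))) = C'
    rw [k.putget₀, ℓ.putget₀]

/-- The identity delta lens: identity functor and `put_A(v) = v`. -/
def idD (A : Type u₁) [Category.{v₁} A] : DLens A A where
  get := 𝟭 A
  tgt := fun _ {B'} _ => B'
  put := fun _ {_B'} v => v
  putget₀ := fun _ {_B'} _ => rfl

theorem heq_eqToHom' {S : Type u₁} [Category.{v₁} S] {X Y Z : S} (h1 : X = Y) (h2 : X = Z) :
    HEq (eqToHom h1) (eqToHom h2) := by subst h1; subst h2; rfl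

theorem put_congr {S : Type u₁} [Category.{v₁} S] {T : Type u₂} [Category.{v₂} T]
    (k : DLens S T) (A : S) {B₁ B₂ : T} (v : k.get.obj A ⟶ B₁) (w : k.get.obj A ⟶ B₂)
    (hB : B₁ = B₂) (hv : HEq v w) : k.tgt A v = k.tgt A w ∧ HEq (k.put A v) (k.put A w) := by
  subst hB; cases hv; exact ⟨rfl, HEq.rfl⟩

end DLens

/-- **Statement 8.** Well-behaved asymmetric delta lenses are closed under sequential
composition: if `k` and `ℓ` both satisfy Stability and Putget, then so does their
composite `(get¹ ⋙ get², put)` with `put_A(w) = put¹_A (put²_{get¹ A} w)`. -/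
theorem DLens.seq_isWb {𝒜 : Type u₁} [Category.{v₁} 𝒜] {ℬ : Type u₂} [Category.{v₂} ℬ]
    {𝒞 : Type u₃} [Category.{v₃} 𝒞] (k : DLens 𝒜 ℬ) (ℓ : DLens ℬ 𝒞)
    (hk : k.IsWb) (hℓ : ℓ.IsWb) : (k.seq ℓ).IsWb := by
  have key : ∀ A : 𝒜, k.tgt A (ℓ.put (k.get.obj A) (𝟙 (ℓ.get.obj (k.get.obj A)))) = k.tgt A (𝟙 (k.get.obj A)) ∧
      HEq (k.put A (ℓ.put (k.get.obj A) (𝟙 (ℓ.get.obj (k.get.obj A))))) (k.put A (𝟙 (k.get.obj A))) := by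
    intro A
    exact put_congr k A _ _ (hℓ.tgt_id _)
      (by rw [hℓ.put_id]; exact (heq_eqToHom' _ rfl).trans (heq_of_eq (eqToHom_refl _ _)))
  have htgt : ∀ A : 𝒜, (k.seq ℓ).tgt A (𝟙 ((k.seq ℓ).get.obj A)) = A := by
    intro A
    show k.tgt A (ℓ.put (k.get.obj A) (𝟙 (ℓ.get.obj (k.get.obj A)))) = A
    rw [(key A).1, hk.tgt_id]
  refine ⟨htgt, ?_, ?_⟩
  · intro A
    show k.put A (ℓ.put (k.get.obj A) (𝟙 (ℓ.get.obj (k.get.obj A)))) = _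
    have h1 := (key A).2
    have h2 : k.tgt A (ℓ.put (k.get.obj A) (𝟙 (ℓ.get.obj (k.get.obj A)))) = k.tgt A (𝟙 (k.get.obj A)) := (key A).1
    apply eq_of_heq
    refine h1.trans ?_
    rw [hk.put_id]
    exact heq_eqToHom' _ _
  · intro A C' w
    have h1 := hk.putget A (ℓ.put (k.get.obj A) w)
    have h2 := hℓ.putget (k.get.obj A) w
    show ℓ.get.map (k.get.map (k.put A (ℓ.put (k.get.obj A) w))) ≫ eqToHom _ = w
    have h3 := congrArg ℓ.get.map h1
    rw [ℓ.get.map_comp, eqToHom_map] at h3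
    calc ℓ.get.map (k.get.map (k.put A (ℓ.put (k.get.obj A) w))) ≫ eqToHom _
        = (ℓ.get.map (k.get.map (k.put A (ℓ.put (k.get.obj A) w))) ≫ eqToHom (congrArg ℓ.get.obj (k.putget₀ A (ℓ.put (k.get.obj A) w)))) ≫ eqToHom (ℓ.putget₀ (k.get.obj A) w) := by
          rw [Category.assoc, eqToHom_trans]
      _ = ℓ.get.map (ℓ.put (k.get.obj A) w) ≫ eqToHom (ℓ.putget₀ (k.get.obj A) w) := by rw [h3]
      _ = (show ℓ.get.obj (k.get.obj A) ⟶ C' from w) := h2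
end

section
/- Asymmetric delta lenses with amendment (aa-lenses) form a category aaLens under the stated composition: the composite of two aa-lenses is an aa-lens (in particular it satisfies the Putget₀ typing for the composed amendment), composition is associative with identity aa-lenses (identity functor, put^a_A(v) = v, identity amendments) as units; moreover, if both aa-lenses are well-behaved (satisfy Stability and the amended Putget law), then so is their composite, so wb aa-lenses form a subcategory aaLens_wb ⊂ aaLens. -/
open CategoryTheory

universe v₁ v₂ v₃ u₁ u₂ u₃

/-- An asymmetric delta lens with amendment (aa-lens) from `S` to `T`: a functor
`get : S ⥤ T`, a put operation `put^a` and an amendment operation `put^b`;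
the typing `put^b_A(v) : B' ⟶ get(A')` is the Putget₀ law. -/
structure AALens (S : Type u₁) [Category.{v₁} S] (T : Type u₂) [Category.{v₂} T] where
  /-- the get functor -/
  get : S ⥤ T
  /-- target of the propagated update -/
  tgtA : ∀ (A : S) {B' : T}, (get.obj A ⟶ B') → S
  /-- the put operation `put^a_A(v) : A ⟶ A'` -/
  putA : ∀ (A : S) {B' : T} (v : get.obj A ⟶ B'), A ⟶ tgtA A v
  /-- the amendment `put^b_A(v) : B' ⟶ get(A')`  (Putget₀) -/
  putB : ∀ (A : S) {B' : T} (v : get.obj A ⟶ B'), B' ⟶ get.obj (tgtA A v)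

namespace AALens

variable {S : Type u₁} [Category.{v₁} S] {T : Type u₂} [Category.{v₂} T]

/-- Well-behavedness of an aa-lens: Stability and the amended Putget law. -/
structure IsWb (ℓ : AALens S T) : Prop where
  /-- Stability: the target of the update propagated from an identity is the original object -/
  tgtA_id : ∀ A : S, ℓ.tgtA A (𝟙 (ℓ.get.obj A)) = A
  /-- Stability: `put^a_A(id) = id_A` -/
  putA_id : ∀ A : S, ℓ.putA A (𝟙 (ℓ.get.obj A)) = eqToHom (tgtA_id A).symm
  /-- Stability: `put^b_A(id) = id` -/
  putB_id : ∀ A : S, ℓ.putB A (𝟙 (ℓ.get.obj A)) = eqToHom (by rw [tgtA_id A])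
  /-- amended Putget: `get(put^a_A(v)) = v ≫ put^b_A(v)` -/
  putget : ∀ (A : S) {B' : T} (v : ℓ.get.obj A ⟶ B'),
    ℓ.get.map (ℓ.putA A v) = v ≫ ℓ.putB A v

variable {A : Type u₁} [Category.{v₁} A] {B : Type u₂} [Category.{v₂} B]
  {C : Type u₃} [Category.{v₃} C]

/-- Sequential composition of aa-lenses: `get = get^k ⋙ get^ℓ`,
`put^a_A(w) = put^{k,a}_A (put^{ℓ,a}_{get^k A} w)` and
`put^b_A(w) = put^{ℓ,b}_{get^k A}(w) ≫ get^ℓ(put^{k,b}_A(v))` where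
`v = put^{ℓ,a}_{get^k A}(w)`. -/
def seq (k : AALens A B) (ℓ : AALens B C) : AALens A C where
  get := k.get ⋙ ℓ.get
  tgtA := fun A' {C'} w => k.tgtA A' (ℓ.putA (k.get.obj A') w)
  putA := fun A' {C'} w => k.putA A' (ℓ.putA (k.get.obj A') w)
  putB := fun A' {C'} w =>
    ℓ.putB (k.get.obj A') w ≫ ℓ.get.map (k.putB A' (ℓ.putA (k.get.obj A') w))

/-- The identity aa-lens: identity functor, `put^a_A(v) = v`, identity amendments. -/
def idA (A : Type u₁) [Category.{v₁} A] : AALens A A where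
  get := 𝟭 A
  tgtA := fun _ {B'} _ => B'
  putA := fun _ {_B'} v => v
  putB := fun _ {B'} _ => 𝟙 B'

end AALens


namespace AALens

variable {S : Type u₁} [Category.{v₁} S] {T : Type u₂} [Category.{v₂} T]

theorem tgtA_eq {ℓ : AALens S T} (h : ℓ.IsWb) (A : S) {B' : T}
    (v : ℓ.get.obj A ⟶ B') (e : ℓ.get.obj A = B') (hv : v = eqToHom e) :
    ℓ.tgtA A v = A := by
  subst hv; subst e; simpa using h.tgtA_id A

theorem putA_eq {ℓ : AALens S T} (h : ℓ.IsWb) (A : S) {B' : T}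
    (v : ℓ.get.obj A ⟶ B') (e : ℓ.get.obj A = B') (hv : v = eqToHom e) :
    ℓ.putA A v = eqToHom (tgtA_eq h A v e hv).symm := by
  subst hv; subst e; simpa using h.putA_id A

theorem putB_eq {ℓ : AALens S T} (h : ℓ.IsWb) (A : S) {B' : T}
    (v : ℓ.get.obj A ⟶ B') (e : ℓ.get.obj A = B') (hv : v = eqToHom e) :
    ℓ.putB A v = eqToHom (by rw [tgtA_eq h A v e hv]; exact e.symm) := by
  subst hv; subst e; simpa using h.putB_id A

end AALens

/-- Asymmetric delta lenses with amendment (aa-lenses) form a category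
under the stated composition: the composite of two aa-lenses is an aa-lens (in particular
the composed amendment satisfies the Putget₀ typing, witnessed by the last clause being
well-typed), composition is associative with the identity aa-lenses as units; moreover
well-behaved aa-lenses are closed under this composition and identities are well-behaved,
so wb aa-lenses form a subcategory `aaLens_wb ⊂ aaLens`. -/
theorem AALens.aaLens_category
    {𝒜 : Type u₁} [Category.{v₁} 𝒜] {ℬ : Type u₂} [Category.{v₂} ℬ]
    {𝒞 : Type u₃} [Category.{v₃} 𝒞] {𝒟 : Type u₁} [Category.{v₁} 𝒟] :
    -- the composite is the stated aa-lens; in particular its amendment is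
    -- `put^{ℓ,b}(w) ≫ get^ℓ(put^{k,b}(v))`, which is Putget₀-typed
    (∀ (k : AALens 𝒜 ℬ) (ℓ : AALens ℬ 𝒞) (A : 𝒜) (C' : 𝒞)
        (w : ℓ.get.obj (k.get.obj A) ⟶ C'),
        (k.seq ℓ).get = k.get ⋙ ℓ.get ∧
        (k.seq ℓ).putA A w = k.putA A (ℓ.putA (k.get.obj A) w) ∧
        (k.seq ℓ).putB A w =
          ℓ.putB (k.get.obj A) w ≫ ℓ.get.map (k.putB A (ℓ.putA (k.get.obj A) w))) ∧
    -- associativity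
    (∀ (k : AALens 𝒟 𝒜) (ℓ : AALens 𝒜 ℬ) (m : AALens ℬ 𝒞),
        (k.seq ℓ).seq m = k.seq (ℓ.seq m)) ∧
    -- identity aa-lenses are units
    (∀ f : AALens 𝒜 ℬ, (AALens.idA 𝒜).seq f = f ∧ f.seq (AALens.idA ℬ) = f) ∧
    -- well-behaved aa-lenses form a subcategory
    (AALens.idA 𝒜).IsWb ∧
    (∀ (k : AALens 𝒜 ℬ) (ℓ : AALens ℬ 𝒞), k.IsWb → ℓ.IsWb → (k.seq ℓ).IsWb) := by
  refine ⟨fun k ℓ A C' w => ⟨rfl, rfl, rfl⟩, ?_, ?_, ?_, ?_⟩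
  · intro k ℓ m
    obtain ⟨kg, kt, ka, kb⟩ := k
    obtain ⟨lg, lt, la, lb⟩ := ℓ
    obtain ⟨mg, mt, ma, mb⟩ := m
    dsimp only [seq]
    congr 1
    funext A C' w
    simp [Functor.map_comp, Category.assoc]
  · intro f
    obtain ⟨g, t, pa, pb⟩ := f
    constructor
    · dsimp only [seq, idA]
      congr 1
      funext A B' w
      simp
    · dsimp only [seq, idA]
      congr 1
      funext A B' w
      simp
  · refine ⟨fun A => rfl, fun A => rfl, fun A => rfl, ?_⟩
    intro A B' v
    exact (Category.comp_id v).symm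
  · intro k ℓ hk hℓ
    have hv : ∀ A : 𝒜, ℓ.putA (k.get.obj A) (𝟙 (ℓ.get.obj (k.get.obj A)))
        = eqToHom (hℓ.tgtA_id (k.get.obj A)).symm := fun A => hℓ.putA_id _
    have tgt : ∀ A : 𝒜, (k.seq ℓ).tgtA A (𝟙 ((k.seq ℓ).get.obj A)) = A := by
      intro A
      exact tgtA_eq hk A _ (hℓ.tgtA_id (k.get.obj A)).symm (hv A)
    refine ⟨tgt, ?_, ?_, ?_⟩
    · intro A
      exact putA_eq hk A _ (hℓ.tgtA_id (k.get.obj A)).symm (hv A)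
    · intro A
      show ℓ.putB (k.get.obj A) (𝟙 _) ≫
          ℓ.get.map (k.putB A (ℓ.putA (k.get.obj A) (𝟙 _))) = _
      rw [hℓ.putB_id, putB_eq hk A _ (hℓ.tgtA_id (k.get.obj A)).symm (hv A)]
      simp [eqToHom_map]
      rfl
    · intro A C' w
      show ℓ.get.map (k.get.map (k.putA A (ℓ.putA (k.get.obj A) w))) = _
      rw [hk.putget, Functor.map_comp]
      erw [hℓ.putget]
      simp [seq, Category.assoc]
      exact Category.assoc _ _ _
end

section
/- An ordinary asymmetric delta lens can be regarded as an aa-lens whose amendments are all identities, and this identification is compatible with composition and well-behavedness: if two aa-lenses have identity amendments, then their aa-lens composite also has identity amendments and its get and put^a components coincide with the sequential composition of the underlying plain delta lenses; moreover an aa-lens with identity amendments is well-behaved as an aa-lens if and only if the underlying plain delta lens is well-behaved. Hence there are embeddings aLens ⊂ aaLens and aLens_wb ⊂ aaLens_wb. -/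
open CategoryTheory

universe v₁ v₂ v₃ u₁ u₂ u₃

/-- A plain delta lens regarded as an aa-lens whose amendments are all identities
(along the Putget₀ equality `get(A') = B'`). -/
def DLens.toAA {S : Type u₁} [Category.{v₁} S] {T : Type u₂} [Category.{v₂} T]
    (d : DLens S T) : AALens S T where
  get := d.get
  tgtA := d.tgt
  putA := d.put
  putB := fun A {_B'} v => eqToHom (d.putget₀ A v).symm

/-- An aa-lens has identity amendments if each amendment is the identity
(modulo the Putget₀ equality `get(A') = B'`). -/
def AALens.HasIdAmendments {S : Type u₁} [Category.{v₁} S] {T : Type u₂} [Category.{v₂} T]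
    (ℓ : AALens S T) : Prop :=
  ∀ (A : S) (B' : T) (v : ℓ.get.obj A ⟶ B'),
    ∃ h : ℓ.get.obj (ℓ.tgtA A v) = B', ℓ.putB A v = eqToHom h.symm

/-- Plain delta lenses embed into aa-lenses as the aa-lenses with
identity amendments, compatibly with composition and well-behavedness: the composite of
two aa-lenses with identity amendments again has identity amendments and its `get`/`put^a`
components are those of the sequential composition of the underlying plain lenses; `toAA`
is injective and commutes with composition; and an aa-lens with identity amendments is
well-behaved iff the underlying plain lens is. -/
theorem DLens.toAA_embedding
    {S : Type u₁} [Category.{v₁} S] {T : Type u₂} [Category.{v₂} T]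
    {𝒜 : Type u₁} [Category.{v₁} 𝒜] {ℬ : Type u₂} [Category.{v₂} ℬ]
    {𝒞 : Type u₃} [Category.{v₃} 𝒞] :
    -- identity amendments are preserved by composition, whose get/putᵃ components are
    -- those of plain sequential composition
    (∀ (k : AALens 𝒜 ℬ) (ℓ : AALens ℬ 𝒞), k.HasIdAmendments → ℓ.HasIdAmendments →
        ((k.seq ℓ).HasIdAmendments ∧
          (k.seq ℓ).get = k.get ⋙ ℓ.get ∧
          ∀ (A : 𝒜) (C' : 𝒞) (w : ℓ.get.obj (k.get.obj A) ⟶ C'),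
            (k.seq ℓ).putA A w = k.putA A (ℓ.putA (k.get.obj A) w))) ∧
    -- `toAA` identifies plain lenses with aa-lenses with identity amendments,
    -- compatibly with composition
    (∀ d : DLens S T, d.toAA.HasIdAmendments) ∧
    (Function.Injective (DLens.toAA (S := S) (T := T))) ∧
    (∀ (k : DLens 𝒜 ℬ) (ℓ : DLens ℬ 𝒞), k.toAA.seq ℓ.toAA = (k.seq ℓ).toAA) ∧
    -- well-behavedness corresponds
    (∀ d : DLens S T, d.toAA.IsWb ↔ d.IsWb) := by
  refine ⟨?_, ?_, ?_, ?_, ?_⟩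
  · rintro k ℓ hk hℓ
    refine ⟨?_, rfl, fun A C' w => rfl⟩
    intro A C' w
    obtain ⟨h1, e1⟩ := hℓ (k.get.obj A) C' w
    obtain ⟨h2, e2⟩ := hk A _ (ℓ.putA (k.get.obj A) w)
    refine ⟨show ℓ.get.obj (k.get.obj (k.tgtA A (ℓ.putA (k.get.obj A) w))) = C' from (congrArg ℓ.get.obj h2).trans h1, ?_⟩
    show ℓ.putB (k.get.obj A) w ≫ ℓ.get.map (k.putB A (ℓ.putA (k.get.obj A) w)) = _
    rw [e1, e2, eqToHom_map, eqToHom_trans]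
    rfl
  · intro d A B' v
    exact ⟨d.putget₀ A v, rfl⟩
  · intro d₁ d₂ h
    cases d₁; cases d₂
    simp only [DLens.toAA, AALens.mk.injEq] at h
    obtain ⟨h1, h2, h3, -⟩ := h
    subst h1; subst h2; subst h3; rfl
  · intro k ℓ
    cases k; cases ℓ
    simp only [DLens.toAA, DLens.seq, AALens.seq, AALens.mk.injEq, heq_eq_eq,
      true_and, and_true, eq_self_iff_true]
    funext A C' w
    rw [eqToHom_map, eqToHom_trans]
  · intro d
    constructor
    · rintro ⟨h1, h2, h3, h4⟩
      refine ⟨h1, h2, fun A B' v => ?_⟩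
      have := h4 A v
      simp only [DLens.toAA] at this
      rw [this]; simp
    · rintro ⟨h1, h2, h3⟩
      refine ⟨h1, h2, fun A => rfl, fun A B' v => ?_⟩
      have := h3 A v
      show d.get.map (d.put A v) = v ≫ eqToHom (d.putget₀ A v).symm
      exact (comp_eqToHom_iff _ _ _).mp this
end

section
/- Small categories as objects together with equivalence classes of parameterized functors as morphisms form a category pCat: sequential composition of equivalence classes of p-functors is well defined and strictly associative (using the canonical isomorphism (𝒫 × 𝒬) × ℛ ≅ 𝒫 × (𝒬 × ℛ), strict associativity of functor composition, and strict associativity of the Godement product), and the identity p-functors (𝟙, Id) are two-sided units. -/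
open CategoryTheory

universe u

/-- A parameterized functor (p-functor) from `S` to `T`: a category `P` of parameters
together with a functor `P ⥤ Fun(S, T)`. -/
structure ParFunctor (S : Type u) [Category.{u} S] (T : Type u) [Category.{u} T] where
  /-- the category of parameters -/
  P : Type u
  [instP : Category.{u} P]
  /-- the underlying functor into the functor category -/
  F : P ⥤ S ⥤ T

attribute [instance] ParFunctor.instP

/-- A (strict) isomorphism of categories. -/
structure CatIso (A : Type u) (B : Type u) [Category.{u} A] [Category.{u} B] where
  hom : A ⥤ B
  inv : B ⥤ A
  hom_inv_id : hom ⋙ inv = 𝟭 A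
  inv_hom_id : inv ⋙ hom = 𝟭 B

namespace CatIso

/-- The identity isomorphism of categories. -/
def refl (A : Type u) [Category.{u} A] : CatIso A A where
  hom := 𝟭 A
  inv := 𝟭 A
  hom_inv_id := rfl
  inv_hom_id := rfl

/-- Product of isomorphisms of categories. -/
def prod {A : Type u} [Category.{u} A] {B : Type u} [Category.{u} B]
    {C : Type u} [Category.{u} C] {D : Type u} [Category.{u} D]
    (ι : CatIso A B) (κ : CatIso C D) : CatIso (A × C) (B × D) where
  hom := ι.hom.prod κ.hom
  inv := ι.inv.prod κ.inv
  hom_inv_id := by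
    rw [show ι.hom.prod κ.hom ⋙ ι.inv.prod κ.inv
        = (ι.hom ⋙ ι.inv).prod (κ.hom ⋙ κ.inv) from rfl, ι.hom_inv_id, κ.hom_inv_id]
    rfl
  inv_hom_id := by
    rw [show ι.inv.prod κ.inv ⋙ ι.hom.prod κ.hom
        = (ι.inv ⋙ ι.hom).prod (κ.inv ⋙ κ.hom) from rfl, ι.inv_hom_id, κ.inv_hom_id]
    rfl

end CatIso

namespace ParFunctor

section Seq

variable {A : Type u} [Category.{u} A] {B : Type u} [Category.{u} B]
  {C : Type u} [Category.{u} C]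

/-- Sequential composition of p-functors: parameter category `𝒫 × 𝒬`,
`(f;g)_{(p,q)} = f_p ⋙ g_q` on objects and the Godement product on parameter arrows. -/
def seq (f : ParFunctor A B) (g : ParFunctor B C) : ParFunctor A C where
  P := f.P × g.P
  F :=
    { obj := fun pq => f.F.obj pq.1 ⋙ g.F.obj pq.2
      map := fun eh => f.F.map eh.1 ◫ g.F.map eh.2
      map_id := by
        intro pq
        ext X
        simp [NatTrans.hcomp]
      map_comp := by
        intro pq pq' pq'' eh eh'
        dsimp
        rw [Functor.map_comp, Functor.map_comp, NatTrans.exchange] }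

end Seq

/-- The identity p-functor: terminal parameter category, constantly the identity functor. -/
def idP (A : Type u) [Category.{u} A] : ParFunctor A A where
  P := Discrete PUnit.{u + 1}
  F := (Functor.const _).obj (𝟭 A)

variable {S : Type u} [Category.{u} S] {T : Type u} [Category.{u} T]

/-- Equivalence of p-functors via a given isomorphism `α` of the parameter categories:
`f` and `α ⋙ f'` are naturally isomorphic. -/
def EquivVia (f f' : ParFunctor S T) (α : CatIso f.P f'.P) : Prop :=
  Nonempty (f.F ≅ α.hom ⋙ f'.F)

/-- Equivalence of p-functors: some isomorphism of the parameter categories identifies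
them up to natural isomorphism. -/
def Equiv (f f' : ParFunctor S T) : Prop :=
  ∃ α : CatIso f.P f'.P, EquivVia f f' α

end ParFunctor

/-- An object of the category `pCat`: a small category. -/
structure PCat : Type (u + 1) where
  /-- the underlying category -/
  carrier : Type u
  [cat : Category.{u} carrier]

attribute [instance] PCat.cat

/-- Morphisms of `pCat`: equivalence classes of parameterized functors. -/
def PHom (X Y : PCat.{u}) : Type (u + 1) :=
  Quot (ParFunctor.Equiv (S := X.carrier) (T := Y.carrier))

namespace ParFunctor
variable {A : Type u} [Category.{u} A] {B : Type u} [Category.{u} B]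
  {C : Type u} [Category.{u} C]

theorem seq_equiv {f f' : ParFunctor A B} {g g' : ParFunctor B C}
    (hf : f.Equiv f') (hg : g.Equiv g') : (f.seq g).Equiv (f'.seq g') := by
  obtain ⟨α, ⟨φ⟩⟩ := hf
  obtain ⟨β, ⟨ψ⟩⟩ := hg
  refine ⟨α.prod β, ⟨NatIso.ofComponents
    (fun pq => Functor.isoWhiskerRight (φ.app pq.1) (g.F.obj pq.2) ≪≫
      Functor.isoWhiskerLeft (f'.F.obj (α.hom.obj pq.1)) (ψ.app pq.2)) ?_⟩⟩
  intro pq pq' eh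
  ext X
  dsimp [seq, CatIso.prod, NatTrans.hcomp]
  simp only [Category.assoc]
  rw [← Functor.map_comp_assoc, ← NatTrans.comp_app, φ.hom.naturality eh.1, NatTrans.comp_app,
    Functor.map_comp_assoc, ← NatTrans.naturality_assoc, NatTrans.naturality (ψ.hom.app pq'.2),
    ← NatTrans.comp_app_assoc (g.F.map eh.2) (ψ.hom.app pq'.2), ψ.hom.naturality eh.2,
    NatTrans.comp_app]
  simp
  rw [← NatTrans.naturality_assoc (g'.F.map (β.hom.map eh.2))]
  rfl

theorem idP_seq_equiv (f : ParFunctor A B) : ((idP A).seq f).Equiv f := by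
  refine ⟨⟨CategoryTheory.Prod.snd (Discrete PUnit.{u+1}) f.P, ((Functor.const f.P).obj (Discrete.mk PUnit.unit)).prod' (𝟭 f.P), rfl, rfl⟩,
    ⟨NatIso.ofComponents (fun up => Functor.leftUnitor (f.F.obj up.2)) ?_⟩⟩
  intro up up' eh
  ext X
  simp [seq, idP, NatTrans.hcomp]
  rfl

theorem seq_idP_equiv (f : ParFunctor A B) : (f.seq (idP B)).Equiv f := by
  refine ⟨⟨CategoryTheory.Prod.fst f.P (Discrete PUnit.{u+1}), (𝟭 f.P).prod' ((Functor.const f.P).obj (Discrete.mk PUnit.unit)), rfl, rfl⟩,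
    ⟨NatIso.ofComponents (fun pu => Functor.rightUnitor (f.F.obj pu.1)) ?_⟩⟩
  intro pu pu' eh
  ext X
  simp [seq, idP, NatTrans.hcomp]
  rfl

theorem seq_assoc_equiv {D : Type u} [Category.{u} D]
    (f : ParFunctor A B) (g : ParFunctor B C) (h : ParFunctor C D) :
    ((f.seq g).seq h).Equiv (f.seq (g.seq h)) := by
  refine ⟨⟨prod.associator _ _ _, prod.inverseAssociator _ _ _, rfl, rfl⟩,
    ⟨NatIso.ofComponents (fun pqr =>
      Functor.associator (f.F.obj pqr.1.1) (g.F.obj pqr.1.2) (h.F.obj pqr.2)) ?_⟩⟩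
  intro pqr pqr' eh
  ext X
  simp [seq, NatTrans.hcomp]
  exact (Category.comp_id _).trans ((Category.assoc _ _ _).symm.trans (Category.id_comp _).symm)

end ParFunctor

theorem ParFunctor.equiv_refl {A : Type u} [Category.{u} A] {B : Type u} [Category.{u} B]
    (f : ParFunctor A B) : f.Equiv f :=
  ⟨CatIso.refl _, ⟨(Functor.leftUnitor f.F).symm⟩⟩

/-- composition of equivalence classes of p-functors -/
def PHom.comp {X Y Z : PCat.{u}} (q1 : PHom X Y) (q2 : PHom Y Z) : PHom X Z :=
  Quot.lift
    (fun f => Quot.lift (fun g => Quot.mk _ (f.seq g))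
      (fun _ _ hg => Quot.sound (ParFunctor.seq_equiv (ParFunctor.equiv_refl f) hg)) q2)
    (fun _ _ hf => by
      induction q2 using Quot.ind with
      | _ g => exact Quot.sound (ParFunctor.seq_equiv hf (ParFunctor.equiv_refl g)))
    q1

/-- **Statement 12.** Small categories as objects together with equivalence classes of
parameterized functors as morphisms form a category `pCat`: sequential composition of
p-functors descends to a well-defined composition of equivalence classes, which is
strictly associative, and the classes of the identity p-functors are two-sided units. -/
theorem PCat.pCat_category :
    ∃ comp : ∀ X Y Z : PCat.{u}, PHom X Y → PHom Y Z → PHom X Z,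
      -- composition descends sequential composition of p-functors to equivalence classes
      (∀ (X Y Z : PCat.{u}) (f : ParFunctor X.carrier Y.carrier)
          (g : ParFunctor Y.carrier Z.carrier),
          comp X Y Z (Quot.mk _ f) (Quot.mk _ g) = Quot.mk _ (f.seq g)) ∧
      -- the identity p-functors are two-sided units
      (∀ (X Y : PCat.{u}) (f : PHom X Y),
          comp X X Y (Quot.mk _ (ParFunctor.idP X.carrier)) f = f) ∧
      (∀ (X Y : PCat.{u}) (f : PHom X Y),
          comp X Y Y f (Quot.mk _ (ParFunctor.idP Y.carrier)) = f) ∧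
      -- composition is (strictly) associative
      (∀ (X Y Z W : PCat.{u}) (f : PHom X Y) (g : PHom Y Z) (h : PHom Z W),
          comp X Z W (comp X Y Z f g) h = comp X Y W f (comp Y Z W g h)) := by
  refine ⟨fun _ _ _ => PHom.comp, fun _ _ _ _ _ => rfl, ?_, ?_, ?_⟩
  · intro X Y f
    induction f using Quot.ind with
    | _ f => exact Quot.sound (ParFunctor.idP_seq_equiv f)
  · intro X Y f
    induction f using Quot.ind with
    | _ f => exact Quot.sound (ParFunctor.seq_idP_equiv f)
  · intro X Y Z W f g h
    induction f using Quot.ind with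
    | _ f =>
      induction g using Quot.ind with
      | _ g =>
        induction h using Quot.ind with
        | _ h => exact Quot.sound (ParFunctor.seq_assoc_equiv f g h)
end
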